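/- Let M be an n×n real symmetric matrix with ‖M‖_op ≤ 2√n, and let M' = M + E where E is symmetric. Suppose ‖M'‖_op > 10√n, and let v and u be unit left and right singular vectors of M' corresponding to its leading singular value. Let Q ⊆ [n] be the support of E (i.e., E_{ij} = 0 unless i ∈ Q and j ∈ Q), and let ṽ, ũ be the restrictions of v, u to the coordinates in Q. Then (‖ṽ‖² + ‖ũ‖²)/2 ≥ 1/2. -/

import Mathlib

open Matrix

/-- The ℓ²→ℓ² operator norm of a real square matrix. -/
noncomputable def matOpNorm {n : ℕ} (M : Matrix (Fin n) (Fin n) ℝ) : ℝ :=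
  ‖(Matrix.toEuclideanCLM (𝕜 := ℝ) M)‖

lemma dot_le {n : ℕ} (A : Matrix (Fin n) (Fin n) ℝ) (x y : Fin n → ℝ) :
    x ⬝ᵥ A.mulVec y ≤ matOpNorm A * Real.sqrt (∑ i, x i ^ 2) * Real.sqrt (∑ i, y i ^ 2) := by
  set x' : EuclideanSpace ℝ (Fin n) := (WithLp.equiv 2 _).symm x
  set y' : EuclideanSpace ℝ (Fin n) := (WithLp.equiv 2 _).symm y
  have hxnorm : ‖x'‖ = Real.sqrt (∑ i, x i ^ 2) := by
    rw [EuclideanSpace.norm_eq]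
    congr 1
    refine Finset.sum_congr rfl fun i _ => ?_
    rw [Real.norm_eq_abs, sq_abs]
    rfl
  have hynorm : ‖y'‖ = Real.sqrt (∑ i, y i ^ 2) := by
    rw [EuclideanSpace.norm_eq]
    congr 1
    refine Finset.sum_congr rfl fun i _ => ?_
    rw [Real.norm_eq_abs, sq_abs]
    rfl
  have happ : (toEuclideanCLM (𝕜 := ℝ) A) y' = (WithLp.equiv 2 _).symm (A.mulVec y) := by
    rfl
  have hinner : x ⬝ᵥ A.mulVec y = inner ℝ x' ((toEuclideanCLM (𝕜 := ℝ) A) y') := by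
    rw [happ]
    rw [PiLp.inner_apply]
    simp only [PiLp.inner_apply, RCLike.inner_apply, starRingEnd_apply, star_trivial,
      WithLp.equiv_symm_apply, PiLp.toLp_apply, x', dotProduct, mulVec, mul_comm]
  calc x ⬝ᵥ A.mulVec y = inner ℝ x' ((toEuclideanCLM (𝕜 := ℝ) A) y') := hinner
    _ ≤ ‖x'‖ * ‖(toEuclideanCLM (𝕜 := ℝ) A) y'‖ := real_inner_le_norm _ _
    _ ≤ ‖x'‖ * (matOpNorm A * ‖y'‖) := by
        gcongr
        exact (toEuclideanCLM (𝕜 := ℝ) A).le_opNorm y'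
    _ = matOpNorm A * Real.sqrt (∑ i, x i ^ 2) * Real.sqrt (∑ i, y i ^ 2) := by
        rw [hxnorm, hynorm]; ring

/-- If ‖M‖_op ≤ 2√n, M' = M + E with E symmetric supported on Q × Q,
‖M'‖_op > 10√n, and v, u are unit left/right singular vectors of M' for the leading
singular value, then the restrictions ṽ, ũ of v, u to Q satisfy (‖ṽ‖² + ‖ũ‖²)/2 ≥ 1/2. -/
theorem stmt4 {n : ℕ} (M E : Matrix (Fin n) (Fin n) ℝ)
    (hM : M.IsSymm) (hE : E.IsSymm)
    (hMop : matOpNorm M ≤ 2 * Real.sqrt n)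
    (Q : Finset (Fin n))
    (hsupp : ∀ i j, ¬(i ∈ Q ∧ j ∈ Q) → E i j = 0)
    (hM'op : matOpNorm (M + E) > 10 * Real.sqrt n)
    (v u : Fin n → ℝ)
    (hv : ∑ i, v i ^ 2 = 1) (hu : ∑ i, u i ^ 2 = 1)
    (hsing : v ⬝ᵥ (M + E).mulVec u = matOpNorm (M + E)) :
    ((∑ i ∈ Q, v i ^ 2) + (∑ i ∈ Q, u i ^ 2)) / 2 ≥ 1 / 2 := by
  classical
  set s : ℝ := matOpNorm (M + E) with hs
  set x : Fin n → ℝ := fun i => if i ∈ Q then v i else 0 with hx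
  set y : Fin n → ℝ := fun i => if i ∈ Q then u i else 0 with hy
  set a2 : ℝ := ∑ i ∈ Q, v i ^ 2 with ha2
  set b2 : ℝ := ∑ i ∈ Q, u i ^ 2 with hb2
  have ha2nn : 0 ≤ a2 := Finset.sum_nonneg fun i _ => sq_nonneg _
  have hb2nn : 0 ≤ b2 := Finset.sum_nonneg fun i _ => sq_nonneg _
  have hsqn : (0:ℝ) ≤ Real.sqrt n := Real.sqrt_nonneg _
  have hxsum : ∑ i, x i ^ 2 = a2 := by
    calc ∑ i, x i ^ 2 = ∑ i, if i ∈ Q then v i ^ 2 else 0 :=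
          Finset.sum_congr rfl fun i _ => by by_cases h : i ∈ Q <;> simp [hx, h]
      _ = a2 := by rw [Finset.sum_ite_mem, Finset.univ_inter]
  have hysum : ∑ i, y i ^ 2 = b2 := by
    calc ∑ i, y i ^ 2 = ∑ i, if i ∈ Q then u i ^ 2 else 0 :=
          Finset.sum_congr rfl fun i _ => by by_cases h : i ∈ Q <;> simp [hy, h]
      _ = b2 := by rw [Finset.sum_ite_mem, Finset.univ_inter]
  have hdot : v ⬝ᵥ E.mulVec u = x ⬝ᵥ E.mulVec y := by
    simp only [dotProduct, mulVec, Finset.mul_sum]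
    refine Finset.sum_congr rfl fun i _ => Finset.sum_congr rfl fun j _ => ?_
    by_cases hi : i ∈ Q
    · by_cases hj : j ∈ Q
      · simp [hx, hy, hi, hj]
      · simp [hsupp i j (by tauto)]
    · simp [hsupp i j (by tauto)]
  have hMbound : v ⬝ᵥ M.mulVec u ≤ 2 * Real.sqrt n := by
    have h := dot_le M v u
    rw [hv, hu, Real.sqrt_one, mul_one, mul_one] at h
    exact h.trans hMop
  have hEnorm : matOpNorm E ≤ s + 2 * Real.sqrt n := by
    have hadd : matOpNorm E =
        ‖toEuclideanCLM (𝕜 := ℝ) (M + E) - toEuclideanCLM (𝕜 := ℝ) M‖ := by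
      rw [← map_sub]
      congr 1
      abel
    rw [hadd]
    calc ‖toEuclideanCLM (𝕜 := ℝ) (M + E) - toEuclideanCLM (𝕜 := ℝ) M‖
        ≤ ‖toEuclideanCLM (𝕜 := ℝ) (M + E)‖ + ‖toEuclideanCLM (𝕜 := ℝ) M‖ := norm_sub_le _ _
      _ ≤ s + 2 * Real.sqrt n := by exact add_le_add le_rfl hMop
  have hEnn : 0 ≤ matOpNorm E := norm_nonneg _
  have hsnn : 0 < s + 2 * Real.sqrt n := by linarith
  have hprod : Real.sqrt a2 * Real.sqrt b2 ≤ (a2 + b2) / 2 := by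
    nlinarith [Real.sq_sqrt ha2nn, Real.sq_sqrt hb2nn,
      sq_nonneg (Real.sqrt a2 - Real.sqrt b2), Real.sqrt_nonneg a2, Real.sqrt_nonneg b2]
  have hEdot : v ⬝ᵥ E.mulVec u ≤ (s + 2 * Real.sqrt n) * ((a2 + b2) / 2) := by
    rw [hdot]
    have h := dot_le E x y
    rw [hxsum, hysum] at h
    refine h.trans ?_
    calc matOpNorm E * Real.sqrt a2 * Real.sqrt b2
        = matOpNorm E * (Real.sqrt a2 * Real.sqrt b2) := by ring
      _ ≤ (s + 2 * Real.sqrt n) * ((a2 + b2) / 2) := by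
          apply mul_le_mul hEnorm hprod
            (mul_nonneg (Real.sqrt_nonneg _) (Real.sqrt_nonneg _)) hsnn.le
  have hsplit : s = v ⬝ᵥ M.mulVec u + v ⬝ᵥ E.mulVec u := by
    rw [← hsing, add_mulVec, dotProduct_add]
  by_contra hc
  push_neg at hc
  have ht : (a2 + b2) / 2 < 1 / 2 := hc
  nlinarith [mul_nonneg hsnn.le (show (0:ℝ) ≤ 1 / 2 - (a2 + b2) / 2 by linarith)]
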